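/- Let d ≥ 1 and let L = {L_i}_{i=1}^{d²} be a measure basis for d×d complex matrices with all weights l_i = tr L_i strictly positive, Gram matrix G, bias matrix A = diag(l_i), and √Φ := A^{1/2}(A^{1/2}G^{-1}A^{1/2})^{1/2}A^{-1/2}. Then: (i) √Φ is column quasistochastic, i.e. every column of √Φ sums to 1; (ii) the weight vector (l_1,…,l_{d²}) is a right eigenvector of √Φ with eigenvalue 1; and consequently (iii) √Φ·AJ = AJ·√Φ = AJ, where J is the d²×d² all-ones matrix. -/

import Mathlib

open Matrix BigOperators
open scoped ComplexOrder Kronecker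

/-- A measure basis: a linearly independent family of `d²` Hermitian `d×d` complex
matrices summing to the identity, with nonnegative traces. -/
def IsMeasureBasis {d : ℕ} (L : Fin (d ^ 2) → Matrix (Fin d) (Fin d) ℂ) : Prop :=
  (∀ i, (L i).IsHermitian) ∧ LinearIndependent ℝ L ∧ (∑ i, L i) = 1 ∧ ∀ i, 0 ≤ ((L i).trace).re

/-- A Wigner basis: an orthogonal measure basis. -/
def IsWignerBasis {d : ℕ} (L : Fin (d ^ 2) → Matrix (Fin d) (Fin d) ℂ) : Prop :=
  IsMeasureBasis L ∧ ∀ i j, i ≠ j → (L i * L j).trace = 0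

/-- The rescaled frame operator `S_L(X) = ∑ⱼ (tr(X Lⱼ)/lⱼ) Lⱼ`. -/
noncomputable def rsFrameOp {n : Type*} [Fintype n] {m : Type*} [Fintype m] [DecidableEq m]
    (L : n → Matrix m m ℂ) (X : Matrix m m ℂ) : Matrix m m ℂ :=
  ∑ j, (((X * L j).trace) / ((L j).trace)) • L j

/-- A map on matrices that is ℝ-linear, Hermiticity-preserving, self-adjoint with respect to
the Hilbert–Schmidt inner product on Hermitian matrices, and positive. -/
def IsPosSelfAdjMap {m : Type*} [Fintype m]
    (T : Matrix m m ℂ → Matrix m m ℂ) : Prop :=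
  IsLinearMap ℝ T ∧ (∀ X, X.IsHermitian → (T X).IsHermitian) ∧
  (∀ X Y, X.IsHermitian → Y.IsHermitian → (T X * Y).trace = (X * T Y).trace) ∧
  (∀ X, X.IsHermitian → 0 ≤ ((X * T X).trace).re)

/-- `T` is the (unique) positive self-adjoint inverse square root of the rescaled frame
operator of `L`, i.e. `S_L ∘ T ∘ T = id` on Hermitian matrices; `PW(L) i = T (L i)`. -/
def IsInvSqrtOfFrameOp {n : Type*} [Fintype n] {m : Type*} [Fintype m] [DecidableEq m]
    (L : n → Matrix m m ℂ) (T : Matrix m m ℂ → Matrix m m ℂ) : Prop :=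
  IsPosSelfAdjMap T ∧ ∀ X : Matrix m m ℂ, X.IsHermitian → rsFrameOp L (T (T X)) = X

theorem sqrt_born_aux {d : ℕ} [NeZero d]
    (L : Fin (d ^ 2) → Matrix (Fin d) (Fin d) ℂ)
    (hHerm : ∀ i, (L i).IsHermitian) (hLI : LinearIndependent ℝ L)
    (hSum : (∑ i, L i) = 1)
    (G : Matrix (Fin (d ^ 2)) (Fin (d ^ 2)) ℝ)
    (hG : ∀ i j, G i j = ((L i * L j).trace).re) : G.PosDef := by
  rw [posDef_iff_dotProduct_mulVec]
  constructor
  · ext i j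
    simp only [conjTranspose_apply, hG, star_trivial]
    rw [Matrix.trace_mul_comm]
  · intro x hx
    set M : Matrix (Fin d) (Fin d) ℂ := ∑ i, x i • L i with hM
    have hMne : M ≠ 0 := by
      intro h
      apply hx
      have := (Fintype.linearIndependent_iff.mp hLI) x (by simpa using h)
      funext i; exact this i
    have hMH : Mᴴ = M := by
      rw [hM, conjTranspose_sum]
      refine Finset.sum_congr rfl fun i _ => ?_
      rw [conjTranspose_smul, (hHerm i), star_trivial]
    have key : dotProduct x (G *ᵥ x) = ((M * Mᴴ).trace).re := by
      have hMM : M * Mᴴ = ∑ i, ∑ j, (x i * x j) • (L i * L j) := by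
        rw [hMH, hM, Finset.sum_mul_sum]
        refine Finset.sum_congr rfl fun i _ => Finset.sum_congr rfl fun j _ => ?_
        rw [smul_mul_assoc, mul_smul_comm, smul_smul]
      rw [hMM]
      simp only [Matrix.trace_sum, Matrix.trace_smul, dotProduct, mulVec, hG,
        Complex.re_sum, Complex.real_smul, Complex.re_ofReal_mul]
      refine Finset.sum_congr rfl fun i _ => ?_
      rw [Finset.mul_sum]
      refine Finset.sum_congr rfl fun j _ => ?_
      ring
    have key2 : ((M * Mᴴ).trace).re = ∑ a, ∑ b, Complex.normSq (M a b) := by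
      simp only [Matrix.trace, Matrix.diag, Matrix.mul_apply, Matrix.conjTranspose_apply,
        Complex.re_sum]
      refine Finset.sum_congr rfl fun a _ => Finset.sum_congr rfl fun b _ => ?_
      rw [show star (M a b) = (starRingEnd ℂ) (M a b) from rfl, Complex.mul_conj,
        Complex.ofReal_re]
    simp only [star_trivial, key, key2]
    obtain ⟨a, b, hab⟩ : ∃ a b, M a b ≠ 0 := by
      by_contra h
      push_neg at h
      exact hMne (by ext a b; exact h a b)
    refine Finset.sum_pos' (fun a _ => Finset.sum_nonneg fun b _ => Complex.normSq_nonneg _)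
      ⟨a, Finset.mem_univ a, Finset.sum_pos' (fun b _ => Complex.normSq_nonneg _)
        ⟨b, Finset.mem_univ b, ?_⟩⟩
    exact Complex.normSq_pos.mpr hab

/-- `√Φ` is column quasistochastic, the weight vector is a right eigenvector
of `√Φ` with eigenvalue 1, and `√Φ·AJ = AJ·√Φ = AJ`. -/
theorem sqrt_born_matrix_quasistochastic {d : ℕ} [NeZero d]
    (L : Fin (d ^ 2) → Matrix (Fin d) (Fin d) ℂ)
    (hL : IsMeasureBasis L) (hpos : ∀ i, 0 < ((L i).trace).re)
    (G A Asq AsqInv B sqrtPhi J : Matrix (Fin (d ^ 2)) (Fin (d ^ 2)) ℝ)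
    (hG : ∀ i j, G i j = ((L i * L j).trace).re)
    (hA : A = Matrix.diagonal fun i => ((L i).trace).re)
    (hAsq : Asq = Matrix.diagonal fun i => Real.sqrt (((L i).trace).re))
    (hAsqInv : AsqInv = Matrix.diagonal fun i => (Real.sqrt (((L i).trace).re))⁻¹)
    (hBpsd : B.PosSemidef) (hBsq : B * B = Asq * G⁻¹ * Asq)
    (hsqrtPhi : sqrtPhi = Asq * B * AsqInv)
    (hJ : J = Matrix.of fun _ _ => (1 : ℝ)) :
    (∀ j, ∑ i, sqrtPhi i j = 1) ∧
    (sqrtPhi *ᵥ (fun i => ((L i).trace).re) = fun i => ((L i).trace).re) ∧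
    sqrtPhi * (A * J) = A * J ∧ (A * J) * sqrtPhi = A * J := by
  obtain ⟨hHerm, hLI, hSum, -⟩ := hL
  set l : Fin (d ^ 2) → ℝ := fun i => ((L i).trace).re with hl
  have hlpos : ∀ i, 0 < l i := hpos
  have hspos : ∀ i, 0 < Real.sqrt (l i) := fun i => Real.sqrt_pos.mpr (hlpos i)
  have hGpd := sqrt_born_aux L hHerm hLI hSum G hG
  have hGinv : G⁻¹ * G = 1 := Matrix.nonsing_inv_mul G hGpd.det_pos.ne'.isUnit
  have hGones : G *ᵥ (fun _ => (1 : ℝ)) = l := by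
    funext i
    simp only [mulVec, dotProduct, mul_one, hG]
    have h1 : ∑ j, (L i * L j).trace = (L i).trace := by
      rw [← Matrix.trace_sum, ← Finset.mul_sum, hSum, mul_one]
    rw [← Complex.re_sum, h1]
  have hGil : G⁻¹ *ᵥ l = fun _ => (1 : ℝ) := by
    rw [← hGones, mulVec_mulVec, hGinv, one_mulVec]
  set u : Fin (d ^ 2) → ℝ := fun i => Real.sqrt (l i) with hu
  have huAsq : Asq *ᵥ u = l := by
    funext i; rw [hAsq]
    exact (mulVec_diagonal _ _ _).trans (Real.mul_self_sqrt (hlpos i).le)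
  have hAsqOnes : Asq *ᵥ (fun _ => (1 : ℝ)) = u := by
    funext i; rw [hAsq]
    exact (mulVec_diagonal _ _ _).trans (mul_one _)
  have hB2u : (B * B) *ᵥ u = u := by
    rw [hBsq, ← mulVec_mulVec, ← mulVec_mulVec, huAsq, hGil, hAsqOnes]
  have hBu : B *ᵥ u = u := by
    set w : Fin (d ^ 2) → ℝ := B *ᵥ u - u with hw
    have hBw : B *ᵥ w = -w := by
      rw [hw, mulVec_sub, mulVec_mulVec, hB2u]
      abel
    have h1 : (0 : ℝ) ≤ dotProduct w (B *ᵥ w) := by simpa using hBpsd.dotProduct_mulVec_nonneg w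
    rw [hBw, dotProduct_neg] at h1
    have h2 : dotProduct w w = 0 :=
      le_antisymm (by linarith) (Finset.sum_nonneg fun i _ => mul_self_nonneg _)
    have h3 : w = 0 := dotProduct_self_eq_zero.mp h2
    have : B *ᵥ u - u = 0 := h3
    rw [sub_eq_zero] at this
    exact this
  have hAsqInvl : AsqInv *ᵥ l = u := by
    funext i; rw [hAsqInv]
    refine (mulVec_diagonal _ _ _).trans ?_
    rw [show l i = Real.sqrt (l i) * Real.sqrt (l i) from (Real.mul_self_sqrt (hlpos i).le).symm,
      inv_mul_cancel_left₀ (hspos i).ne']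
  have hright : sqrtPhi *ᵥ l = l := by
    rw [hsqrtPhi, ← mulVec_mulVec, ← mulVec_mulVec, hAsqInvl, hBu, huAsq]
  have hcol : (fun _ => (1 : ℝ)) ᵥ* sqrtPhi = fun _ => (1 : ℝ) := by
    have hBsym : Bᵀ = B := hBpsd.1
    have h1 : (fun _ => (1 : ℝ)) ᵥ* Asq = u := by
      funext i; rw [hAsq]
      exact (vecMul_diagonal _ _ _).trans (one_mul _)
    have h2 : u ᵥ* B = u := by
      rw [← mulVec_transpose, hBsym, hBu]
    have h3 : u ᵥ* AsqInv = fun _ => (1 : ℝ) := by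
      funext i; rw [hAsqInv]
      exact (vecMul_diagonal _ _ _).trans (mul_inv_cancel₀ (hspos i).ne')
    rw [hsqrtPhi, ← vecMul_vecMul, ← vecMul_vecMul, h1, h2, h3]
  have hAJ : A * J = Matrix.of fun i _ => l i := by
    ext i j
    simp [hA, hJ, mul_apply, Matrix.diagonal]
  refine ⟨?_, hright, ?_, ?_⟩
  · intro j
    have := congrFun hcol j
    simpa [vecMul, dotProduct] using this
  · ext i j
    rw [hAJ]
    simp only [mul_apply, Matrix.of_apply]
    exact congrFun hright i
  · ext i j
    rw [hAJ]
    simp only [mul_apply, Matrix.of_apply, ← Finset.mul_sum]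
    have := congrFun hcol j
    simp only [vecMul, dotProduct, one_mul] at this
    rw [this, mul_one]
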